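/- Let α > 0, β > 1 and γ > 0 satisfy γ·(β−1) > 1. Suppose (U₁, V₁) and (U₂, V₂) are two solutions of the kinetic system on all of ℝ such that Uᵢ(t) > 0 and Vᵢ(t) > 0 for all t ∈ ℝ (i = 1,2) and (Uᵢ(t), Vᵢ(t)) → (γ, 0) as t → −∞ for i = 1,2. Then the two solutions coincide up to a time translation: there exists τ ∈ ℝ such that (U₂(t), V₂(t)) = (U₁(t + τ), V₁(t + τ)) for all t ∈ ℝ. -/

import Mathlib

open Filter Set

section Aux

/-- Key algebraic sign lemma for the orbit comparison. -/
lemma RM_key_ineq (α β γ u₁ u₂ v : ℝ)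
    (h₁ : 0 < 1 + u₁) (h₂ : 0 < 1 + u₂) (hv : 0 < v)
    (hq : 0 < (β - 1) * u₂ - 1)
    (hR : α * ((β - 1) * u₁ * u₂ * (γ - 1 - u₁ - u₂)
      - (γ + (γ - 1) * (u₁ + u₂) - (u₁ ^ 2 + u₁ * u₂ + u₂ ^ 2))) + v < 0) :
    (u₂ - u₁) * ((α * u₂ * (γ - u₂) - u₂ * v / (1 + u₂))
        * ((-(v) + β * u₂ * v / (1 + u₂))⁻¹ * (-(v) + β * u₁ * v / (1 + u₁)))
      - (α * u₁ * (γ - u₁) - u₁ * v / (1 + u₁))) ≤ 0 := by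
  have hG₂ : (-(v) + β * u₂ * v / (1 + u₂)) = v * ((β - 1) * u₂ - 1) / (1 + u₂) := by
    field_simp; ring
  have hG₂ne : (-(v) + β * u₂ * v / (1 + u₂)) ≠ 0 := by
    rw [hG₂]
    positivity
  have key : (u₂ - u₁) * ((α * u₂ * (γ - u₂) - u₂ * v / (1 + u₂))
        * ((-(v) + β * u₂ * v / (1 + u₂))⁻¹ * (-(v) + β * u₁ * v / (1 + u₁)))
      - (α * u₁ * (γ - u₁) - u₁ * v / (1 + u₁)))
      = (u₂ - u₁) ^ 2 * (α * ((β - 1) * u₁ * u₂ * (γ - 1 - u₁ - u₂)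
      - (γ + (γ - 1) * (u₁ + u₂) - (u₁ ^ 2 + u₁ * u₂ + u₂ ^ 2))) + v)
        / ((1 + u₁) * ((β - 1) * u₂ - 1)) := by
    rw [hG₂]
    generalize hQ : (β - 1) * u₂ - 1 = q at hq ⊢
    have hu₂ : u₂ ≠ 0 := by rintro rfl; linarith
    have hβ : β = (q + 1 + u₂) / u₂ := by rw [eq_div_iff hu₂]; linarith
    subst hβ
    field_simp
    ring
  rw [key]
  apply div_nonpos_of_nonpos_of_nonneg
  · exact mul_nonpos_of_nonneg_of_nonpos (sq_nonneg _) hR.le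
  · positivity

lemma RM_delta (α β γ : ℝ) (hα : 0 < α) (hβ : 1 < β) (hγ : 0 < γ)
    (h1 : 1 < γ * (β - 1)) :
    ∃ d : ℝ, 0 < d ∧ d < γ ∧ ∀ u₁ u₂ v : ℝ, |u₁ - γ| ≤ d → |u₂ - γ| ≤ d →
      0 < v → v ≤ d →
      0 < (β - 1) * u₂ - 1 ∧
      α * ((β - 1) * u₁ * u₂ * (γ - 1 - u₁ - u₂)
        - (γ + (γ - 1) * (u₁ + u₂) - (u₁ ^ 2 + u₁ * u₂ + u₂ ^ 2))) + v < 0 := by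
  have hbpos : 0 < β - 1 := by linarith
  have hbγ : 0 < (β - 1) * γ - 1 := by nlinarith
  set c₀ : ℝ := γ * (1 + γ) * ((β - 1) * γ - 1) / 2 with hc₀def
  have hc₀ : 0 < c₀ := by positivity
  set Rf : ℝ × ℝ → ℝ := fun p => (β - 1) * p.1 * p.2 * (γ - 1 - p.1 - p.2)
    - (γ + (γ - 1) * (p.1 + p.2) - (p.1 ^ 2 + p.1 * p.2 + p.2 ^ 2)) with hRf
  have hRγ : Rf (γ, γ) = -2 * c₀ := by simp only [hRf, hc₀def]; ring
  have hcont : Continuous Rf := by fun_prop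
  have hopen : IsOpen (Rf ⁻¹' Iio (-c₀)) := (isOpen_Iio).preimage hcont
  have hmem : (γ, γ) ∈ Rf ⁻¹' Iio (-c₀) := by
    simp only [mem_preimage, mem_Iio, hRγ]; linarith
  obtain ⟨ε, hε, hball⟩ := Metric.isOpen_iff.mp hopen _ hmem
  obtain ⟨d, hdpos, hd1, hd2, hd3, hd4⟩ : ∃ d : ℝ, 0 < d ∧ d ≤ ε / 2 ∧ d ≤ γ / 2
      ∧ d ≤ α * c₀ / 2 ∧ d ≤ ((β - 1) * γ - 1) / (2 * (β - 1)) :=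
    ⟨min (ε / 2) (min (γ / 2) (min (α * c₀ / 2) (((β - 1) * γ - 1) / (2 * (β - 1))))),
      by positivity, min_le_left _ _,
      le_trans (min_le_right _ _) (min_le_left _ _),
      le_trans (min_le_right _ _) (le_trans (min_le_right _ _) (min_le_left _ _)),
      le_trans (min_le_right _ _) (le_trans (min_le_right _ _) (min_le_right _ _))⟩
  refine ⟨d, hdpos, by linarith, ?_⟩
  intro u₁ u₂ v hu₁ hu₂ hv hvd
  have hu₁' := abs_le.mp hu₁
  have hu₂' := abs_le.mp hu₂
  constructor
  · have hbd : (β - 1) * d ≤ ((β - 1) * γ - 1) / 2 := by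
      calc (β - 1) * d ≤ (β - 1) * (((β - 1) * γ - 1) / (2 * (β - 1))) := by nlinarith
        _ = ((β - 1) * γ - 1) / 2 := by field_simp
    nlinarith [hu₂'.1]
  · have hRlt : Rf (u₁, u₂) < -c₀ := by
      apply hball
      rw [Metric.mem_ball, Prod.dist_eq]
      simp only [Real.dist_eq]
      calc max |u₁ - γ| |u₂ - γ| ≤ d := max_le hu₁ hu₂
        _ ≤ ε / 2 := hd1
        _ < ε := by linarith
    have hαR : α * Rf (u₁, u₂) < -(α * c₀) := by nlinarith
    simp only [hRf] at hαR
    nlinarith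

lemma RM_unique_global (α β γ : ℝ) (U₁ V₁ U₂ V₂ : ℝ → ℝ)
    (hsol₁ : ∀ t : ℝ,
      HasDerivAt U₁ (α * U₁ t * (γ - U₁ t) - U₁ t * V₁ t / (1 + U₁ t)) t ∧
      HasDerivAt V₁ (-(V₁ t) + β * U₁ t * V₁ t / (1 + U₁ t)) t)
    (hsol₂ : ∀ t : ℝ,
      HasDerivAt U₂ (α * U₂ t * (γ - U₂ t) - U₂ t * V₂ t / (1 + U₂ t)) t ∧
      HasDerivAt V₂ (-(V₂ t) + β * U₂ t * V₂ t / (1 + U₂ t)) t)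
    (hpos₁ : ∀ t : ℝ, 0 < U₁ t ∧ 0 < V₁ t)
    (t₀ s₀ : ℝ) (hU : U₂ s₀ = U₁ t₀) (hV : V₂ s₀ = V₁ t₀) :
    ∀ t : ℝ, U₂ t = U₁ (t + (t₀ - s₀)) ∧ V₂ t = V₁ (t + (t₀ - s₀)) := by
  set τ := t₀ - s₀ with hτ
  set Φ : ℝ × ℝ → ℝ × ℝ := fun p =>
    (α * p.1 * (γ - p.1) - p.1 * p.2 / (1 + p.1), -p.2 + β * p.1 * p.2 / (1 + p.1)) with hΦ
  set x : ℝ → ℝ × ℝ := fun t => (U₁ (t + τ), V₁ (t + τ)) with hx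
  set y : ℝ → ℝ × ℝ := fun t => (U₂ t, V₂ t) with hy
  have hxd : ∀ t : ℝ, HasDerivAt x (Φ (x t)) t := by
    intro t
    have h1 : HasDerivAt (fun t => U₁ (t + τ))
        ((α * U₁ (t + τ) * (γ - U₁ (t + τ)) - U₁ (t + τ) * V₁ (t + τ) / (1 + U₁ (t + τ))) * 1) t :=
      (hsol₁ (t + τ)).1.comp t ((hasDerivAt_id t).add_const τ)
    have h2 : HasDerivAt (fun t => V₁ (t + τ))
        ((-(V₁ (t + τ)) + β * U₁ (t + τ) * V₁ (t + τ) / (1 + U₁ (t + τ))) * 1) t :=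
      (hsol₁ (t + τ)).2.comp t ((hasDerivAt_id t).add_const τ)
    simpa [hΦ, hx] using h1.prodMk h2
  have hyd : ∀ t : ℝ, HasDerivAt y (Φ (y t)) t := by
    intro t
    simpa [hΦ, hy] using (hsol₂ t).1.prodMk (hsol₂ t).2
  have hxc : Continuous x := by
    apply Continuous.prodMk
    · exact (continuous_iff_continuousAt.mpr fun t => (hsol₁ t).1.continuousAt).comp
        (continuous_id.add continuous_const)
    · exact (continuous_iff_continuousAt.mpr fun t => (hsol₁ t).2.continuousAt).comp
        (continuous_id.add continuous_const)
  have hyc : Continuous y := by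
    apply Continuous.prodMk
    · exact continuous_iff_continuousAt.mpr fun t => (hsol₂ t).1.continuousAt
    · exact continuous_iff_continuousAt.mpr fun t => (hsol₂ t).2.continuousAt
  set S : Set ℝ := {t | x t = y t} with hS
  have hclosed : IsClosed S := isClosed_eq hxc hyc
  have hopen : IsOpen S := by
    rw [isOpen_iff_mem_nhds]
    intro t₁ ht₁
    have heq : x t₁ = y t₁ := ht₁
    set p := x t₁ with hp
    have hp1 : 0 < 1 + p.1 := by
      simp only [hp, hx]
      linarith [(hpos₁ (t₁ + τ)).1]
    have hcd : ContDiffAt ℝ 1 Φ p := by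
      have hne : (fun q : ℝ × ℝ => 1 + q.1) p ≠ 0 := ne_of_gt hp1
      apply ContDiffAt.prodMk
      · exact ContDiffAt.sub (by fun_prop) (ContDiffAt.div (by fun_prop) (by fun_prop) hne)
      · exact ContDiffAt.add (by fun_prop) (ContDiffAt.div (by fun_prop) (by fun_prop) hne)
    obtain ⟨K, s, hs, hK⟩ := hcd.exists_lipschitzOnWith
    have hxev : ∀ᶠ t in nhds t₁, HasDerivAt x (Φ (x t)) t ∧ x t ∈ s := by
      have : ∀ᶠ t in nhds t₁, x t ∈ s := hxc.continuousAt hs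
      exact this.mono fun t ht => ⟨hxd t, ht⟩
    have hyev : ∀ᶠ t in nhds t₁, HasDerivAt y (Φ (y t)) t ∧ y t ∈ s := by
      have : ∀ᶠ t in nhds t₁, y t ∈ s := hyc.continuousAt (heq ▸ hs)
      exact this.mono fun t ht => ⟨hyd t, ht⟩
    have := ODE_solution_unique_of_eventually (Filter.Eventually.of_forall fun _ : ℝ => hK) hxev hyev heq
    exact this.mono fun t ht => ht
  have hs₀ : s₀ ∈ S := by
    simp only [hS, mem_setOf_eq, hx, hy]
    have : s₀ + τ = t₀ := by rw [hτ]; ring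
    rw [this, hU, hV]
  have huniv : S = univ := IsClopen.eq_univ ⟨hclosed, hopen⟩ ⟨s₀, hs₀⟩
  intro t
  have : x t = y t := by
    have : t ∈ S := huniv ▸ mem_univ t
    exact this
  have h := Prod.ext_iff.mp this
  exact ⟨h.1.symm, h.2.symm⟩
end Aux


/-- Rosenzweig–MacArthur kinetic system: if `γ(β-1) > 1`, any two entire solutions
with positive components converging to `(γ, 0)` as `t → -∞` coincide up to a time
translation (uniqueness of the heteroclinic orbit leaving `(γ,0)`). -/
theorem uniqueness_heteroclinic_from_gamma (α β γ : ℝ)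
    (hα : 0 < α) (hβ : 1 < β) (hγ : 0 < γ) (h1 : 1 < γ * (β - 1))
    (U₁ V₁ U₂ V₂ : ℝ → ℝ)
    (hsol₁ : ∀ t : ℝ,
      HasDerivAt U₁ (α * U₁ t * (γ - U₁ t) - U₁ t * V₁ t / (1 + U₁ t)) t ∧
      HasDerivAt V₁ (-(V₁ t) + β * U₁ t * V₁ t / (1 + U₁ t)) t)
    (hsol₂ : ∀ t : ℝ,
      HasDerivAt U₂ (α * U₂ t * (γ - U₂ t) - U₂ t * V₂ t / (1 + U₂ t)) t ∧
      HasDerivAt V₂ (-(V₂ t) + β * U₂ t * V₂ t / (1 + U₂ t)) t)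
    (hpos₁ : ∀ t : ℝ, 0 < U₁ t ∧ 0 < V₁ t)
    (hpos₂ : ∀ t : ℝ, 0 < U₂ t ∧ 0 < V₂ t)
    (hlim₁ : Tendsto (fun t => (U₁ t, V₁ t)) atBot (nhds ((γ, 0) : ℝ × ℝ)))
    (hlim₂ : Tendsto (fun t => (U₂ t, V₂ t)) atBot (nhds ((γ, 0) : ℝ × ℝ))) :
    ∃ τ : ℝ, ∀ t : ℝ, U₂ t = U₁ (t + τ) ∧ V₂ t = V₁ (t + τ) := by
  -- continuity of the solution components
  have hU₁c : Continuous U₁ := continuous_iff_continuousAt.mpr fun t => (hsol₁ t).1.continuousAt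
  have hV₁c : Continuous V₁ := continuous_iff_continuousAt.mpr fun t => (hsol₁ t).2.continuousAt
  have hU₂c : Continuous U₂ := continuous_iff_continuousAt.mpr fun t => (hsol₂ t).1.continuousAt
  have hV₂c : Continuous V₂ := continuous_iff_continuousAt.mpr fun t => (hsol₂ t).2.continuousAt
  -- componentwise limits
  have hlimU₁ : Tendsto U₁ atBot (nhds γ) := by
    simpa [Function.comp_def] using (continuous_fst.tendsto ((γ, 0) : ℝ × ℝ)).comp hlim₁
  have hlimV₁ : Tendsto V₁ atBot (nhds 0) := by
    simpa [Function.comp_def] using (continuous_snd.tendsto ((γ, 0) : ℝ × ℝ)).comp hlim₁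
  have hlimU₂ : Tendsto U₂ atBot (nhds γ) := by
    simpa [Function.comp_def] using (continuous_fst.tendsto ((γ, 0) : ℝ × ℝ)).comp hlim₂
  have hlimV₂ : Tendsto V₂ atBot (nhds 0) := by
    simpa [Function.comp_def] using (continuous_snd.tendsto ((γ, 0) : ℝ × ℝ)).comp hlim₂
  obtain ⟨d, hdpos, hdγ, hdkey⟩ := RM_delta α β γ hα hβ hγ h1
  -- localization times
  have hTex : ∀ (U V : ℝ → ℝ), Tendsto U atBot (nhds γ) → Tendsto V atBot (nhds 0) →
      ∃ T : ℝ, ∀ t ≤ T, |U t - γ| ≤ d ∧ V t ≤ d := by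
    intro U V hU hV
    have h1 : ∀ᶠ t in atBot, |U t - γ| < d := by
      simpa [Real.dist_eq] using Metric.tendsto_nhds.mp hU d hdpos
    have h2 : ∀ᶠ t in atBot, V t < d := hV.eventually_lt_const hdpos
    obtain ⟨T, hT⟩ := eventually_atBot.mp (h1.and h2)
    exact ⟨T, fun t ht => ⟨(hT t ht).1.le, (hT t ht).2.le⟩⟩
  obtain ⟨T₁, hT₁⟩ := hTex U₁ V₁ hlimU₁ hlimV₁
  obtain ⟨T₂, hT₂⟩ := hTex U₂ V₂ hlimU₂ hlimV₂
  -- positivity of the V₂-equation right-hand side on `Iic T₂`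
  have hq₂ : ∀ s, s ≤ T₂ → 0 < (β - 1) * U₂ s - 1 := fun s hs =>
    (hdkey (U₂ s) (U₂ s) d (hT₂ s hs).1 (hT₂ s hs).1 hdpos le_rfl).1
  have hG₂pos : ∀ s, s ≤ T₂ → 0 < -(V₂ s) + β * U₂ s * V₂ s / (1 + U₂ s) := by
    intro s hs
    have h0 : (0:ℝ) < 1 + U₂ s := by linarith [(hpos₂ s).1]
    have he : -(V₂ s) + β * U₂ s * V₂ s / (1 + U₂ s)
        = V₂ s * ((β - 1) * U₂ s - 1) / (1 + U₂ s) := by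
      field_simp; ring
    rw [he]
    have h2 := (hpos₂ s).2
    have h3 := hq₂ s hs
    positivity
  -- V₂ is strictly increasing on `Iic T₂`
  have hmono₂ : StrictMonoOn V₂ (Iic T₂) := by
    apply strictMonoOn_of_deriv_pos (convex_Iic T₂) hV₂c.continuousOn
    intro t ht
    rw [interior_Iic] at ht
    rw [(hsol₂ t).2.deriv]
    exact hG₂pos t ht.le
  have hV21 : V₂ (T₂ - 2) < V₂ (T₂ - 1) :=
    hmono₂ (by simp) (by simp) (by linarith)
  have hV22pos : 0 < V₂ (T₂ - 2) := (hpos₂ _).2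
  have hV21pos : 0 < V₂ (T₂ - 1) := (hpos₂ _).2
  -- a time T before which V₁ is below V₂ (T₂ - 2)
  obtain ⟨T, hTT₁, hT⟩ : ∃ T, T ≤ T₁ ∧ ∀ t ≤ T, V₁ t ≤ V₂ (T₂ - 2) := by
    obtain ⟨T', hT'⟩ := eventually_atBot.mp (hlimV₁.eventually_lt_const hV22pos)
    exact ⟨min T' T₁, min_le_right _ _,
      fun t ht => (hT' t (le_trans ht (min_le_left _ _))).le⟩
  -- the local inverse of V₂
  have hρex : ∀ y : ℝ, ∃ s : ℝ, 0 < y → y ≤ V₂ (T₂ - 1) → s ≤ T₂ - 1 ∧ V₂ s = y := by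
    intro y
    by_cases hy : 0 < y ∧ y ≤ V₂ (T₂ - 1)
    · obtain ⟨s', hs'le, hs'⟩ : ∃ s', s' ≤ T₂ - 1 ∧ V₂ s' < y := by
        obtain ⟨s', h1', h2'⟩ :=
          ((hlimV₂.eventually_lt_const hy.1).and (eventually_le_atBot (T₂ - 1))).exists
        exact ⟨s', h2', h1'⟩
      obtain ⟨s, hsmem, hseq⟩ :=
        intermediate_value_Icc hs'le hV₂c.continuousOn ⟨hs'.le, hy.2⟩
      exact ⟨s, fun _ _ => ⟨hsmem.2, hseq⟩⟩
    · exact ⟨0, fun h1' h2' => absurd ⟨h1', h2'⟩ hy⟩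
  choose ρ hρ using hρex
  -- continuity of ρ on (0, V₂ (T₂-1))
  have hρcont : ∀ y₀ : ℝ, 0 < y₀ → y₀ < V₂ (T₂ - 1) → ContinuousAt ρ y₀ := by
    intro y₀ hy₀ hy₀'
    rw [Metric.continuousAt_iff]
    intro ε hε
    obtain ⟨hs₀le, hs₀eq⟩ := hρ y₀ hy₀ hy₀'.le
    set s₀ := ρ y₀ with hs₀def
    set ε' := min (ε / 2) 1 with hε'def
    have hε'pos : (0:ℝ) < ε' := lt_min (by linarith) one_pos
    have hε'le : ε' ≤ 1 := min_le_right _ _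
    have hε'le2 : ε' ≤ ε / 2 := min_le_left _ _
    have hlo : V₂ (s₀ - ε') < y₀ := by
      rw [← hs₀eq]
      exact hmono₂ (mem_Iic.mpr (by linarith)) (mem_Iic.mpr (by linarith)) (by linarith)
    have hhi : y₀ < V₂ (s₀ + ε') := by
      rw [← hs₀eq]
      exact hmono₂ (mem_Iic.mpr (by linarith)) (mem_Iic.mpr (by linarith)) (by linarith)
    refine ⟨min (min (y₀ - V₂ (s₀ - ε')) (V₂ (s₀ + ε') - y₀)) (min y₀ (V₂ (T₂ - 1) - y₀)),
      lt_min (lt_min (by linarith) (by linarith)) (lt_min hy₀ (by linarith)), ?_⟩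
    intro y hy
    rw [Real.dist_eq] at hy
    have hy' := abs_lt.mp hy
    have hd1 : y - y₀ < V₂ (s₀ + ε') - y₀ := lt_of_lt_of_le hy'.2
      (le_trans (min_le_left _ _) (min_le_right _ _))
    have hd2 : -(y₀ - V₂ (s₀ - ε')) < y - y₀ := lt_of_le_of_lt
      (neg_le_neg (le_trans (min_le_left _ _) (min_le_left _ _))) hy'.1
    have hd3 : -y₀ < y - y₀ := lt_of_le_of_lt
      (neg_le_neg (le_trans (min_le_right _ _) (min_le_left _ _))) hy'.1
    have hd4 : y - y₀ < V₂ (T₂ - 1) - y₀ := lt_of_lt_of_le hy'.2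
      (le_trans (min_le_right _ _) (min_le_right _ _))
    have hypos : 0 < y := by linarith
    have hyle : y ≤ V₂ (T₂ - 1) := by linarith
    obtain ⟨hsle, hseq⟩ := hρ y hypos hyle
    rw [Real.dist_eq, abs_lt]
    have hlt1 : ρ y < s₀ + ε' := by
      by_contra hcon
      push_neg at hcon
      have := hmono₂.monotoneOn (mem_Iic.mpr (by linarith)) (mem_Iic.mpr (by linarith)) hcon
      rw [hseq] at this
      linarith
    have hgt1 : s₀ - ε' < ρ y := by
      by_contra hcon
      push_neg at hcon
      have := hmono₂.monotoneOn (mem_Iic.mpr (by linarith)) (mem_Iic.mpr (by linarith)) hcon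
      rw [hseq] at this
      linarith
    constructor <;> linarith
  -- derivative of ρ
  have hρd : ∀ y₀ : ℝ, 0 < y₀ → y₀ < V₂ (T₂ - 1) →
      HasDerivAt ρ ((-(V₂ (ρ y₀)) + β * U₂ (ρ y₀) * V₂ (ρ y₀) / (1 + U₂ (ρ y₀)))⁻¹) y₀ := by
    intro y₀ hy₀ hy₀'
    have hmem := hρ y₀ hy₀ hy₀'.le
    apply HasDerivAt.of_local_left_inverse (hρcont y₀ hy₀ hy₀') (hsol₂ (ρ y₀)).2
      (ne_of_gt (hG₂pos (ρ y₀) (by linarith [hmem.1])))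
    have : Ioo (0:ℝ) (V₂ (T₂-1)) ∈ nhds y₀ := Ioo_mem_nhds hy₀ hy₀'
    exact Filter.eventually_of_mem this fun y hy => (hρ y hy.1 hy.2.le).2
  -- the matching point
  -- basic facts about σ = ρ ∘ V₁ on `Iic T`
  have hσfact : ∀ t, t ≤ T → ρ (V₁ t) ≤ T₂ - 1 ∧ V₂ (ρ (V₁ t)) = V₁ t := fun t ht =>
    hρ (V₁ t) (hpos₁ t).2 (by linarith [hT t ht, hV21])
  -- the difference of the two orbits in the `V`-parametrization
  set w : ℝ → ℝ := fun t => U₂ (ρ (V₁ t)) - U₁ t with hwdef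
  have hwd : ∀ t, t ≤ T → HasDerivAt w
      ((α * U₂ (ρ (V₁ t)) * (γ - U₂ (ρ (V₁ t)))
          - U₂ (ρ (V₁ t)) * V₂ (ρ (V₁ t)) / (1 + U₂ (ρ (V₁ t))))
        * ((-(V₂ (ρ (V₁ t))) + β * U₂ (ρ (V₁ t)) * V₂ (ρ (V₁ t)) / (1 + U₂ (ρ (V₁ t))))⁻¹
          * (-(V₁ t) + β * U₁ t * V₁ t / (1 + U₁ t)))
        - (α * U₁ t * (γ - U₁ t) - U₁ t * V₁ t / (1 + U₁ t))) t := by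
    intro t ht
    have hv1pos := (hpos₁ t).2
    have hv1lt : V₁ t < V₂ (T₂ - 1) := by linarith [hT t ht, hV21]
    have hσd : HasDerivAt (fun s => ρ (V₁ s))
        ((-(V₂ (ρ (V₁ t))) + β * U₂ (ρ (V₁ t)) * V₂ (ρ (V₁ t)) / (1 + U₂ (ρ (V₁ t))))⁻¹
          * (-(V₁ t) + β * U₁ t * V₁ t / (1 + U₁ t))) t := by
      simpa [Function.comp_def] using (hρd (V₁ t) hv1pos hv1lt).comp t (hsol₁ t).2
    have hUσd : HasDerivAt (fun s => U₂ (ρ (V₁ s)))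
        ((α * U₂ (ρ (V₁ t)) * (γ - U₂ (ρ (V₁ t)))
          - U₂ (ρ (V₁ t)) * V₂ (ρ (V₁ t)) / (1 + U₂ (ρ (V₁ t))))
        * ((-(V₂ (ρ (V₁ t))) + β * U₂ (ρ (V₁ t)) * V₂ (ρ (V₁ t)) / (1 + U₂ (ρ (V₁ t))))⁻¹
          * (-(V₁ t) + β * U₁ t * V₁ t / (1 + U₁ t)))) t := by
      simpa [Function.comp_def] using (hsol₂ (ρ (V₁ t))).1.comp t hσd
    exact hUσd.sub (hsol₁ t).1
  -- the sign of `w * w'`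
  have hsign : ∀ t, t ≤ T → w t *
      ((α * U₂ (ρ (V₁ t)) * (γ - U₂ (ρ (V₁ t)))
          - U₂ (ρ (V₁ t)) * V₂ (ρ (V₁ t)) / (1 + U₂ (ρ (V₁ t))))
        * ((-(V₂ (ρ (V₁ t))) + β * U₂ (ρ (V₁ t)) * V₂ (ρ (V₁ t)) / (1 + U₂ (ρ (V₁ t))))⁻¹
          * (-(V₁ t) + β * U₁ t * V₁ t / (1 + U₁ t)))
        - (α * U₁ t * (γ - U₁ t) - U₁ t * V₁ t / (1 + U₁ t))) ≤ 0 := by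
    intro t ht
    obtain ⟨hσle, hσeq⟩ := hσfact t ht
    rw [hwdef]
    simp only [hσeq]
    have hu₁d := (hT₁ t (le_trans ht hTT₁)).1
    have hv₁d := (hT₁ t (le_trans ht hTT₁)).2
    have hu₂d := (hT₂ (ρ (V₁ t)) (by linarith)).1
    have hkey := hdkey (U₁ t) (U₂ (ρ (V₁ t))) (V₁ t) hu₁d hu₂d (hpos₁ t).2 hv₁d
    exact RM_key_ineq α β γ (U₁ t) (U₂ (ρ (V₁ t))) (V₁ t)
      (by linarith [(hpos₁ t).1]) (by linarith [(hpos₂ (ρ (V₁ t))).1]) (hpos₁ t).2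
      hkey.1 hkey.2
  -- `w ^ 2` is antitone up to time `T`
  have hanti : ∀ a, a ≤ T → (w T) ^ 2 ≤ (w a) ^ 2 := by
    intro a ha
    have h := antitoneOn_of_deriv_nonpos (convex_Icc a T)
      (fun t htm => ((hwd t htm.2).pow 2).continuousAt.continuousWithinAt)
      (fun t htm => by
        rw [interior_Icc] at htm
        exact ((hwd t htm.2.le).pow 2).differentiableAt.differentiableWithinAt)
      (fun t htm => by
        rw [interior_Icc] at htm
        rw [((hwd t htm.2.le).pow 2).deriv]
        have := hsign t htm.2.le
        nlinarith)
    exact h (left_mem_Icc.mpr ha) (right_mem_Icc.mpr ha) ha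
  -- σ tends to -∞ as t → -∞
  have hσtend : Tendsto (fun t => ρ (V₁ t)) atBot atBot := by
    rw [tendsto_atBot]
    intro M
    have hpos' : 0 < V₂ (min M (T₂ - 2)) := (hpos₂ _).2
    filter_upwards [hlimV₁.eventually_lt_const hpos', eventually_le_atBot T] with t h1' h2'
    obtain ⟨hσle, hσeq⟩ := hσfact t h2'
    by_contra hcon
    push_neg at hcon
    have hmlt : V₂ (min M (T₂ - 2)) < V₂ (ρ (V₁ t)) :=
      hmono₂ (mem_Iic.mpr (le_trans (min_le_right _ _) (by linarith)))
        (mem_Iic.mpr (by linarith)) (lt_of_le_of_lt (min_le_left _ _) hcon)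
    rw [hσeq] at hmlt
    linarith
  -- `w → 0` at -∞, hence `w T = 0`
  have hwlim : Tendsto w atBot (nhds 0) := by
    have := (hlimU₂.comp hσtend).sub hlimU₁
    simpa [hwdef, Function.comp_def] using this
  have hElim : Tendsto (fun t => (w t) ^ 2) atBot (nhds 0) := by
    have := hwlim.mul hwlim
    simpa [sq] using this
  have hET : (w T) ^ 2 ≤ 0 :=
    ge_of_tendsto hElim (eventually_atBot.mpr ⟨T, fun a ha => hanti a ha⟩)
  have hwT : w T = 0 := by
    have h2 : (w T) ^ 2 = 0 := le_antisymm hET (sq_nonneg _)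
    exact pow_eq_zero_iff two_ne_zero |>.mp h2
  have hmatch : U₂ (ρ (V₁ T)) = U₁ T ∧ V₂ (ρ (V₁ T)) = V₁ T := by
    constructor
    · have : U₂ (ρ (V₁ T)) - U₁ T = 0 := hwT
      linarith
    · exact (hσfact T le_rfl).2
  -- conclude by global uniqueness of solutions
  refine ⟨T - ρ (V₁ T), ?_⟩
  exact RM_unique_global α β γ U₁ V₁ U₂ V₂ hsol₁ hsol₂ hpos₁ T (ρ (V₁ T))
    hmatch.1 hmatch.2
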